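/- Let M be a real n×n skew-symmetric matrix (Mᵀ = -M), let B be a real n×1 matrix (a column vector), and assume the pair (Bᵀ, M) is observable, i.e., for every nonzero vector v ∈ ℝⁿ there exists a natural number k such that Bᵀ * Mᵏ applied to v is nonzero. Then for every κ > 0, every complex eigenvalue of the matrix M - κ • (B * Bᵀ) (every root in ℂ of its characteristic polynomial) has strictly negative real part. -/
import Mathlib


open Matrix Polynomial

/-- From a root of the characteristic polynomial get an eigenvector. -/
lemma exists_eigvec_of_isRoot_charpoly {n : ℕ} (A : Matrix (Fin n) (Fin n) ℂ) (μ : ℂ)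
    (h : A.charpoly.IsRoot μ) : ∃ v : Fin n → ℂ, v ≠ 0 ∧ A *ᵥ v = μ • v := by
  have hdet : ((Matrix.diagonal (fun _ : Fin n => μ)) - A).det = 0 := by
    have h0 : Polynomial.eval μ A.charpoly = 0 := h
    have hmap := RingHom.map_det (Polynomial.evalRingHom μ) A.charmatrix
    rw [Matrix.charpoly] at h0
    have : ((A.charmatrix).map (Polynomial.evalRingHom μ)).det = 0 := by
      rw [← RingHom.mapMatrix_apply, ← hmap]; exact h0
    convert this using 2
    ext i j
    by_cases hij : i = j
    · subst hij
      simp [Matrix.charmatrix_apply_eq]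
    · simp [Matrix.charmatrix_apply_ne _ _ _ hij, Matrix.diagonal_apply_ne _ hij]
  obtain ⟨v, hv, hv0⟩ := (Matrix.exists_mulVec_eq_zero_iff).2 hdet
  refine ⟨v, hv, ?_⟩
  rw [Matrix.sub_mulVec] at hv0
  have : (Matrix.diagonal (fun _ : Fin n => μ)) *ᵥ v = μ • v := by
    funext i; simp [Matrix.mulVec_diagonal]
  rw [this] at hv0
  linear_combination (norm := module) -hv0

/-- `Matrix.map` by the coercion `ℝ → ℂ` commutes with multiplication. -/
lemma map_mul_coe {m n p : ℕ} (L : Matrix (Fin m) (Fin n) ℝ) (N : Matrix (Fin n) (Fin p) ℝ) :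
    (L * N).map ((↑) : ℝ → ℂ) = L.map ((↑) : ℝ → ℂ) * N.map ((↑) : ℝ → ℂ) := by
  ext i j
  simp only [Matrix.map_apply, Matrix.mul_apply]
  push_cast
  rfl

lemma map_pow_coe {n : ℕ} (M : Matrix (Fin n) (Fin n) ℝ) (k : ℕ) :
    (M ^ k).map ((↑) : ℝ → ℂ) = (M.map ((↑) : ℝ → ℂ)) ^ k := by
  induction k with
  | zero =>
    ext i j
    by_cases hij : i = j <;>
      simp [pow_zero, Matrix.map_apply, Matrix.one_apply, hij]
  | succ k ih =>
    rw [pow_succ, pow_succ, map_mul_coe, ih]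

lemma re_im_of_map_mulVec_eq_zero {m n : ℕ} (N : Matrix (Fin m) (Fin n) ℝ) (v : Fin n → ℂ)
    (h : (N.map ((↑) : ℝ → ℂ)) *ᵥ v = 0) :
    N *ᵥ (fun j => (v j).re) = 0 ∧ N *ᵥ (fun j => (v j).im) = 0 := by
  constructor
  · funext i
    have hi := congrFun h i
    simp only [Matrix.mulVec, dotProduct, Matrix.map_apply, Pi.zero_apply] at hi ⊢
    have := congrArg Complex.re hi
    simpa [Complex.re_sum, Complex.mul_re] using this
  · funext i
    have hi := congrFun h i
    simp only [Matrix.mulVec, dotProduct, Matrix.map_apply, Pi.zero_apply] at hi ⊢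
    have := congrArg Complex.im hi
    simpa [Complex.im_sum, Complex.mul_im] using this

open scoped ComplexOrder in
lemma dot_star_self_eq_zero' {n : ℕ} (w : Fin n → ℂ) (h : star w ⬝ᵥ w = 0) : w = 0 :=
  dotProduct_star_self_eq_zero.1 h

open scoped ComplexOrder in
lemma dot_star_self_pos {n : ℕ} (v : Fin n → ℂ) (hv : v ≠ 0) :
    0 < (star v ⬝ᵥ v).re ∧ (star v ⬝ᵥ v).im = 0 := by
  have h := Matrix.dotProduct_star_self_pos_iff.2 hv
  rw [Complex.lt_def] at h
  exact ⟨by simpa using h.1, by simpa using h.2.symm⟩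

open scoped ComplexOrder in
lemma dot_star_self_nonneg' {n : ℕ} (v : Fin n → ℂ) :
    0 ≤ (star v ⬝ᵥ v).re ∧ (star v ⬝ᵥ v).im = 0 := by
  have h := dotProduct_star_self_nonneg v
  rw [Complex.le_def] at h
  exact ⟨by simpa using h.1, by simpa using h.2.symm⟩

theorem stmt_8 (n : ℕ) (M : Matrix (Fin n) (Fin n) ℝ)
    (hskew : Mᵀ = -M)
    (B : Matrix (Fin n) (Fin 1) ℝ)
    (hobs : ∀ v : Fin n → ℝ, v ≠ 0 → ∃ k : ℕ, (Bᵀ * M ^ k) *ᵥ v ≠ 0) :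
    ∀ κ : ℝ, 0 < κ →
      ∀ μ : ℂ,
        (Matrix.charpoly ((M - κ • (B * Bᵀ)).map ((↑) : ℝ → ℂ))).IsRoot μ →
          μ.re < 0 := by
  intro κ hκ μ hroot
  classical
  set A : Matrix (Fin n) (Fin n) ℝ := M - κ • (B * Bᵀ) with hA
  obtain ⟨v, hv, hev⟩ := exists_eigvec_of_isRoot_charpoly (A.map ((↑) : ℝ → ℂ)) μ hroot
  set Mc : Matrix (Fin n) (Fin n) ℂ := M.map ((↑) : ℝ → ℂ) with hMc
  set Bc : Matrix (Fin n) (Fin 1) ℂ := B.map ((↑) : ℝ → ℂ) with hBc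
  set Ac : Matrix (Fin n) (Fin n) ℂ := A.map ((↑) : ℝ → ℂ) with hAcdef
  set w : Fin 1 → ℂ := Bcᵀ *ᵥ v with hwdef
  have hBBc : (B * Bᵀ).map ((↑) : ℝ → ℂ) = Bc * Bcᵀ := by
    rw [map_mul_coe, hBc, Matrix.transpose_map]
  have hAc : Ac = Mc - (κ : ℂ) • (Bc * Bcᵀ) := by
    rw [hAcdef, hA, ← hBBc, hMc]
    ext i j
    simp only [Matrix.map_apply, Matrix.sub_apply, Matrix.smul_apply, smul_eq_mul]
    push_cast
    ring
  have hMcT : Mcᵀ = -Mc := by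
    rw [hMc, ← Matrix.transpose_map, hskew]
    ext i j
    simp [Matrix.map_apply, Matrix.neg_apply]
  have hBBT : (Bc * Bcᵀ)ᵀ = Bc * Bcᵀ := by
    rw [Matrix.transpose_mul, Matrix.transpose_transpose]
  have hAcT : Acᵀ = -Mc - (κ : ℂ) • (Bc * Bcᵀ) := by
    rw [hAc, Matrix.transpose_sub, Matrix.transpose_smul, hMcT, hBBT]
  -- dot product quantities
  set d : ℂ := star v ⬝ᵥ v with hddef
  set e : ℂ := star w ⬝ᵥ w with hedef
  obtain ⟨hdre, hdim⟩ := dot_star_self_pos v hv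
  obtain ⟨here, heim⟩ := dot_star_self_nonneg' w
  rw [← hddef] at hdre hdim
  rw [← hedef] at here heim
  -- S = μ * d
  have hS : star v ⬝ᵥ (Ac *ᵥ v) = μ * d := by
    rw [hev, dotProduct_smul, smul_eq_mul, hddef]
  -- conjugate identity
  have hAcH : Acᴴ = Acᵀ := by
    ext i j
    simp [hAcdef, Matrix.conjTranspose_apply, Matrix.map_apply]
  have hBcH : (Bcᵀ)ᴴ = Bc := by
    ext i j
    simp [hBc, Matrix.conjTranspose_apply, Matrix.map_apply]
  have hconj : star v ⬝ᵥ (Acᵀ *ᵥ v) = star (μ * d) := by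
    rw [← hS, Matrix.star_dotProduct v (Ac *ᵥ v), star_star, Matrix.star_mulVec, hAcH,
      ← Matrix.dotProduct_mulVec]
  -- the quadratic form of B
  have hwquad : star v ⬝ᵥ ((Bc * Bcᵀ) *ᵥ v) = e := by
    rw [← Matrix.mulVec_mulVec, Matrix.dotProduct_mulVec, hedef, hwdef,
      Matrix.star_mulVec, hBcH]
  -- key equation
  have hkey : μ * d + star (μ * d) = -((2 * κ : ℝ) : ℂ) * e := by
    have h1 : (Ac + Acᵀ) *ᵥ v = (-((2 * κ : ℝ) : ℂ)) • ((Bc * Bcᵀ) *ᵥ v) := by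
      rw [hAcT, hAc]
      have h2 : Mc - (κ : ℂ) • (Bc * Bcᵀ) + (-Mc - (κ : ℂ) • (Bc * Bcᵀ))
          = (-((2 * κ : ℝ) : ℂ)) • (Bc * Bcᵀ) := by
        push_cast
        module
      rw [h2, ← Matrix.smul_mulVec]
    calc μ * d + star (μ * d) = star v ⬝ᵥ (Ac *ᵥ v) + star v ⬝ᵥ (Acᵀ *ᵥ v) := by
          rw [hS, hconj]
      _ = star v ⬝ᵥ ((Ac + Acᵀ) *ᵥ v) := by rw [Matrix.add_mulVec, dotProduct_add]
      _ = -((2 * κ : ℝ) : ℂ) * e := by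
          rw [h1, dotProduct_smul, smul_eq_mul, hwquad]
  have hre : μ.re * d.re = -(κ * e.re) := by
    have h5 := congrArg Complex.re hkey
    simp only [Complex.add_re, Complex.star_def, Complex.conj_re, Complex.mul_re,
      Complex.mul_im, Complex.neg_re, Complex.neg_im, Complex.ofReal_re, Complex.ofReal_im,
      hdim, heim, mul_zero, zero_mul, sub_zero, add_zero] at h5
    nlinarith [h5]
  -- conclude μ.re < 0
  by_contra hcon
  push_neg at hcon
  have h6 : 0 ≤ κ * e.re := mul_nonneg hκ.le here
  have h7 : 0 ≤ μ.re * d.re := mul_nonneg hcon hdre.le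
  have h8 : μ.re * d.re = 0 := le_antisymm (by rw [hre]; linarith) h7
  have hmu0 : μ.re = 0 := by
    rcases mul_eq_zero.1 h8 with h | h
    · exact h
    · exact absurd h (ne_of_gt hdre)
  have hez : e.re = 0 := by
    have : κ * e.re = 0 := by rw [← neg_eq_zero, ← hre, h8]
    rcases mul_eq_zero.1 this with h | h
    · exact absurd h (ne_of_gt hκ)
    · exact h
  -- then w = 0
  have hw0 : w = 0 := by
    have he0 : e = 0 := Complex.ext (by simpa using hez) (by simpa using heim)
    exact dot_star_self_eq_zero' w (hedef ▸ he0)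
  -- M eigen equation
  have hbv : (Bc * Bcᵀ) *ᵥ v = 0 := by
    rw [← Matrix.mulVec_mulVec, ← hwdef, hw0, Matrix.mulVec_zero]
  have hMv : Mc *ᵥ v = μ • v := by
    have h3 : Ac *ᵥ v = Mc *ᵥ v - (κ : ℂ) • ((Bc * Bcᵀ) *ᵥ v) := by
      rw [hAc, Matrix.sub_mulVec, Matrix.smul_mulVec]
    rw [h3, hbv, smul_zero, sub_zero] at hev
    exact hev
  have hpow : ∀ k : ℕ, (Mc ^ k) *ᵥ v = (μ ^ k) • v := by
    intro k
    induction k with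
    | zero => simp
    | succ k ih =>
      rw [pow_succ', ← Matrix.mulVec_mulVec, ih, Matrix.mulVec_smul, hMv, smul_smul,
        ← pow_succ]
  have hBk : ∀ k : ℕ, ((Bᵀ * M ^ k).map ((↑) : ℝ → ℂ)) *ᵥ v = 0 := by
    intro k
    rw [map_mul_coe, map_pow_coe, Matrix.transpose_map, ← Matrix.mulVec_mulVec,
      ← hMc, ← hBc, hpow k, Matrix.mulVec_smul, ← hwdef, hw0, smul_zero]
  -- contradiction with observability
  have hvre : (fun j => (v j).re) ≠ 0 ∨ (fun j => (v j).im) ≠ 0 := by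
    by_contra hvc
    push_neg at hvc
    apply hv
    funext j
    have h1 := congrFun hvc.1 j
    have h2 := congrFun hvc.2 j
    exact Complex.ext (by simpa using h1) (by simpa using h2)
  rcases hvre with hvr | hvi
  · obtain ⟨k, hk⟩ := hobs _ hvr
    exact hk (re_im_of_map_mulVec_eq_zero _ _ (hBk k)).1
  · obtain ⟨k, hk⟩ := hobs _ hvi
    exact hk (re_im_of_map_mulVec_eq_zero _ _ (hBk k)).2
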